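/- Let G be a group and let s, t, g, x ∈ G with s·t = t·s, and let n, m ∈ ℕ. Define v = g^n, w = s⁻¹·g·s, h = t⁻¹·w^m·t, and E = x⁻¹ · (t⁻¹·v^m·t) · x. Then w^n = s⁻¹·v·s, s·h^n·s⁻¹ = t⁻¹·v^m·t, and E = x⁻¹ · (s·h^n·s⁻¹) · x. -/
import Mathlib

private lemma conj_pow_aux {G : Type*} [Group G] (a b : G) (k : ℕ) :
    (a⁻¹ * b * a) ^ k = a⁻¹ * b ^ k * a := by
  rw [show a⁻¹ * b * a = a⁻¹ * b * a⁻¹⁻¹ by rw [inv_inv], conj_pow, inv_inv]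

/-- Kahrobaei–Khan non-commutative ElGamal (power conjugacy search version)
correctness: with `v = g^n`, `w = s⁻¹gs`, `h = t⁻¹wᵐt`, `E = x⁻¹(t⁻¹vᵐt)x`
and `s·t = t·s`, we have `wⁿ = s⁻¹vs`, `s·hⁿ·s⁻¹ = t⁻¹vᵐt`, and
`E = x⁻¹(s·hⁿ·s⁻¹)x`. -/
theorem kk_elgamal_pcsp {G : Type*} [Group G] (s t g x : G)
    (hst : s * t = t * s) (n m : ℕ)
    (v w h E : G) (hv : v = g ^ n) (hw : w = s⁻¹ * g * s)
    (hh : h = t⁻¹ * w ^ m * t) (hE : E = x⁻¹ * (t⁻¹ * v ^ m * t) * x) :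
    w ^ n = s⁻¹ * v * s ∧
      s * h ^ n * s⁻¹ = t⁻¹ * v ^ m * t ∧
        E = x⁻¹ * (s * h ^ n * s⁻¹) * x := by
  have hts : t⁻¹ * s = s * t⁻¹ := by
    rw [inv_mul_eq_iff_eq_mul, ← mul_assoc, ← hst, mul_assoc, mul_inv_cancel, mul_one]
  have h1 : w ^ n = s⁻¹ * v * s := by
    subst hv hw; rw [conj_pow_aux]
  have h2 : s * h ^ n * s⁻¹ = t⁻¹ * v ^ m * t := by
    subst hh
    rw [conj_pow_aux, ← pow_mul, mul_comm m n, pow_mul, h1]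
    calc s * (t⁻¹ * ((s⁻¹ * v * s) ^ m) * t) * s⁻¹
        = s * (t⁻¹ * (s⁻¹ * v ^ m * s) * t) * s⁻¹ := by rw [conj_pow_aux]
      _ = (s * t⁻¹ * s⁻¹) * v ^ m * (s * t * s⁻¹) := by group
      _ = t⁻¹ * v ^ m * t := by
          rw [← hts, hst]; group
  exact ⟨h1, h2, by rw [h2, hE]⟩
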